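/- Let G be a topological group with a Borel probability measure μ, and let h be a bounded μ-harmonic function on G. Set μ̃ = Σ_{n≥0} 2^{-(n+1)} μ^{*n}. Then for every g ∈ G, μ̃({ z ∈ Z(G) : h(zg) ≠ h(g) }) = 0, where Z(G) is the center of G. -/

import Mathlib

open MeasureTheory Filter ProbabilityTheory
open scoped ENNReal NNReal Topology

noncomputable def mconv {G : Type*} [Mul G] [MeasurableSpace G] (μ ν : Measure G) : Measure G :=
  (μ.prod ν).map (fun p => p.1 * p.2)

noncomputable def mconvPow {G : Type*} [Monoid G] [MeasurableSpace G] (μ : Measure G) : ℕ → Measure G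
  | 0 => Measure.dirac 1
  | n+1 => mconv (mconvPow μ n) μ

noncomputable def tvDist {α : Type*} [MeasurableSpace α] (μ ν : Measure α) : ℝ :=
  ⨆ A : Set α, |(μ A).toReal - (ν A).toReal|

noncomputable def tildeMeasure {G : Type*} [Monoid G] [MeasurableSpace G] (μ : Measure G) : Measure G :=
  Measure.sum (fun n => ((2:ℝ≥0∞)^(n+1))⁻¹ • mconvPow μ n)

section Aux

variable {G : Type*} [Group G] [MeasurableSpace G] [MeasurableMul₂ G]

lemma mconv_prob (ν₁ ν₂ : Measure G) [IsProbabilityMeasure ν₁] [IsProbabilityMeasure ν₂] :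
    IsProbabilityMeasure (mconv ν₁ ν₂) :=
  Measure.isProbabilityMeasure_map (measurable_mul (M := G)).aemeasurable

instance mconvPow_prob (μ : Measure G) [IsProbabilityMeasure μ] (n : ℕ) :
    IsProbabilityMeasure (mconvPow μ n) := by
  induction n with
  | zero => exact Measure.dirac.isProbabilityMeasure
  | succ n ih => exact mconv_prob _ _

lemma ibd {α : Type*} [MeasurableSpace α] {ν : Measure α} [IsFiniteMeasure ν]
    {E : Type*} [NormedAddCommGroup E] {f : α → E}
    (hf : AEStronglyMeasurable f ν) {C : ℝ} (hCf : ∀ x, ‖f x‖ ≤ C) : Integrable f ν :=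
  ⟨hf, HasFiniteIntegral.of_bounded (C := C) (Eventually.of_forall hCf)⟩

lemma norm_int_le {α : Type*} [MeasurableSpace α] (ν : Measure α) [IsProbabilityMeasure ν]
    {E : Type*} [NormedAddCommGroup E] [NormedSpace ℝ E] {f : α → E} {C : ℝ}
    (hCf : ∀ x, ‖f x‖ ≤ C) : ‖∫ x, f x ∂ν‖ ≤ C := by
  calc ‖∫ x, f x ∂ν‖ ≤ C * (ν Set.univ).toReal :=
        norm_integral_le_of_norm_le_const (Eventually.of_forall hCf)
  _ = C := by simp

lemma integral_mconv {E : Type*} [NormedAddCommGroup E] [NormedSpace ℝ E] [CompleteSpace E]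
    (ν₁ ν₂ : Measure G) [IsProbabilityMeasure ν₁] [IsProbabilityMeasure ν₂]
    {f : G → E} (hf : StronglyMeasurable f) {C : ℝ} (hCf : ∀ x, ‖f x‖ ≤ C) :
    ∫ x, f x ∂(mconv ν₁ ν₂) = ∫ w, ∫ γ, f (w * γ) ∂ν₂ ∂ν₁ := by
  rw [mconv, integral_map (measurable_mul (M := G)).aemeasurable hf.aestronglyMeasurable]
  exact integral_prod _
    (ibd ((hf.comp_measurable (measurable_mul (M := G))).aestronglyMeasurable) fun p => hCf _)

lemma integral_mconvPow_add (μ : Measure G) [IsProbabilityMeasure μ]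
    {E : Type*} [NormedAddCommGroup E] [NormedSpace ℝ E] [CompleteSpace E] (m n : ℕ) :
    ∀ f : G → E, StronglyMeasurable f → ∀ C : ℝ, (∀ x, ‖f x‖ ≤ C) →
    ∫ u, f u ∂(mconvPow μ (m + n)) = ∫ w, ∫ z, f (w * z) ∂(mconvPow μ n) ∂(mconvPow μ m) := by
  induction n with
  | zero =>
    intro f hf C hCf
    have hpt : ∀ w : G, ∫ z, f (w * z) ∂(mconvPow μ 0) = f w := by
      intro w
      have hsm : StronglyMeasurable fun z => f (w * z) :=
        hf.comp_measurable (measurable_const_mul w)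
      show ∫ z, f (w * z) ∂(Measure.dirac 1) = f w
      rw [integral_dirac' _ _ hsm]
      simp
    simp only [Nat.add_zero, hpt]
  | succ n ih =>
    intro f hf C hCf
    have hF : StronglyMeasurable fun u => ∫ γ, f (u * γ) ∂μ :=
      (hf.comp_measurable (measurable_mul (M := G))).integral_prod_right'
    have hFC : ∀ u, ‖∫ γ, f (u * γ) ∂μ‖ ≤ C := fun u => norm_int_le μ fun γ => hCf _
    have h1 : mconvPow μ (m + (n+1)) = mconv (mconvPow μ (m+n)) μ := rfl
    rw [h1, integral_mconv _ _ hf hCf, ih _ hF C hFC]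
    refine integral_congr_ae (Eventually.of_forall fun w => ?_)
    have hsm : StronglyMeasurable fun z => f (w * z) :=
      hf.comp_measurable (measurable_const_mul w)
    show ∫ z, ∫ γ, f (w * z * γ) ∂μ ∂(mconvPow μ n) = ∫ z, f (w * z) ∂(mconvPow μ (n+1))
    rw [show (mconvPow μ (n+1)) = mconv (mconvPow μ n) μ from rfl,
        integral_mconv _ _ hsm (fun x => hCf _)]
    simp only [mul_assoc]

lemma harm_pow (μ : Measure G) [IsProbabilityMeasure μ] {h : G → ℂ} (hmeas : Measurable h)
    {C : ℝ} (hC : ∀ x, ‖h x‖ ≤ C) (hharm : ∀ g, h g = ∫ γ, h (g * γ) ∂μ)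
    (n : ℕ) (g : G) : h g = ∫ z, h (g * z) ∂(mconvPow μ n) := by
  induction n generalizing g with
  | zero =>
    have hsm : StronglyMeasurable fun z => h (g * z) :=
      (hmeas.comp (measurable_const_mul g)).stronglyMeasurable
    rw [show mconvPow μ 0 = Measure.dirac 1 from rfl, integral_dirac' _ _ hsm]
    simp
  | succ n ih =>
    have hsm : StronglyMeasurable fun z => h (g * z) :=
      (hmeas.comp (measurable_const_mul g)).stronglyMeasurable
    rw [show mconvPow μ (n+1) = mconv (mconvPow μ n) μ from rfl,
      integral_mconv _ _ hsm (fun x => hC _)]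
    calc h g = ∫ w, h (g * w) ∂(mconvPow μ n) := ih g
    _ = ∫ w, ∫ γ, h (g * (w * γ)) ∂μ ∂(mconvPow μ n) := by
        refine integral_congr_ae (Eventually.of_forall fun w => ?_)
        simpa [mul_assoc] using hharm (g * w)

lemma sq_integral_le {α : Type*} [MeasurableSpace α] (ν : Measure α) [IsProbabilityMeasure ν]
    {u : α → ℝ} (hu : AEStronglyMeasurable u ν) {C : ℝ} (hCu : ∀ x, |u x| ≤ C) :
    (∫ x, u x ∂ν)^2 ≤ ∫ x, (u x)^2 ∂ν := by
  set c := ∫ x, u x ∂ν with hc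
  have hiu : Integrable u ν := ibd hu hCu
  have hiu2 : Integrable (fun x => (u x)^2) ν := by
    refine ibd ((hu.mul hu).congr (Eventually.of_forall fun x => (sq (u x)).symm)) (C := C*C) ?_
    intro x
    have h0 : (0:ℝ) ≤ |u x| := abs_nonneg _
    calc ‖(u x)^2‖ = |u x| * |u x| := by rw [Real.norm_eq_abs, abs_pow, sq]
    _ ≤ C * C := mul_le_mul (hCu x) (hCu x) h0 (le_trans h0 (hCu x))
  have h0 : (0:ℝ) ≤ ∫ x, (u x - c)^2 ∂ν := integral_nonneg fun x => sq_nonneg _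
  have hexp : ∫ x, (u x - c)^2 ∂ν = (∫ x, (u x)^2 ∂ν) - c^2 := by
    have hpt : (fun x => (u x - c)^2) = fun x => ((u x)^2 - (2*c) * u x) + c^2 := by
      funext x; ring
    have hsub : Integrable (fun x => u x ^ 2 - 2 * c * u x) ν := by
      exact hiu2.sub (hiu.const_mul _)
    rw [hpt, integral_add hsub (integrable_const _),
        integral_sub hiu2 (hiu.const_mul _), integral_const_mul, integral_const]
    simp only [measure_univ, probReal_univ, ENNReal.toReal_one, smul_eq_mul, one_mul, ← hc]
    ring
  linarith [hexp ▸ h0]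

lemma norm_integral_sq_le {α : Type*} [MeasurableSpace α] (ν : Measure α)
    [IsProbabilityMeasure ν] {f : α → ℂ} (hf : AEStronglyMeasurable f ν) {C : ℝ}
    (hCf : ∀ x, ‖f x‖ ≤ C) : ‖∫ x, f x ∂ν‖^2 ≤ ∫ x, ‖f x‖^2 ∂ν := by
  have h1 : ‖∫ x, f x ∂ν‖ ≤ ∫ x, ‖f x‖ ∂ν := norm_integral_le_integral_norm f
  have h2 := sq_integral_le ν hf.norm (C := C)
    (fun x => by simpa [abs_of_nonneg (norm_nonneg (f x))] using hCf x)
  calc ‖∫ x, f x ∂ν‖^2 ≤ (∫ x, ‖f x‖ ∂ν)^2 := pow_le_pow_left₀ (norm_nonneg _) h1 2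
  _ ≤ _ := h2

lemma normsq_sub_expand (a b : ℂ) :
    ‖a - b‖^2 = ‖a‖^2 - 2 * ((a * (starRingEnd ℂ) b).re) + ‖b‖^2 := by
  simp only [Complex.sq_norm, Complex.normSq_apply, Complex.sub_re,
    Complex.sub_im, Complex.mul_re, Complex.conj_re, Complex.conj_im]
  ring

lemma integral_normsq_sub {α : Type*} [MeasurableSpace α] (ν : Measure α)
    [IsProbabilityMeasure ν] {f : α → ℂ} (hf : AEStronglyMeasurable f ν) {C : ℝ}
    (hCf : ∀ x, ‖f x‖ ≤ C) (b : ℂ) (hb : ∫ x, f x ∂ν = b) :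
    ∫ x, ‖f x - b‖^2 ∂ν = (∫ x, ‖f x‖^2 ∂ν) - ‖b‖^2 := by
  have hif : Integrable f ν := ibd hf hCf
  have hA : Integrable (fun x => ‖f x‖^2) ν := by
    refine ibd ((hf.norm.mul hf.norm).congr (Eventually.of_forall fun x => (sq ‖f x‖).symm))
      (C := C^2) fun x => ?_
    rw [Real.norm_eq_abs, abs_of_nonneg (sq_nonneg _)]
    exact pow_le_pow_left₀ (norm_nonneg _) (hCf x) 2
  have hcross : Integrable (fun x => (f x * (starRingEnd ℂ) b).re) ν := by
    refine ibd (Complex.continuous_re.comp_aestronglyMeasurable (hf.mul_const _))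
      (C := C * ‖b‖) fun x => ?_
    rw [Real.norm_eq_abs]
    calc |(f x * (starRingEnd ℂ) b).re| ≤ ‖f x * (starRingEnd ℂ) b‖ := Complex.abs_re_le_norm _
    _ ≤ ‖f x‖ * ‖b‖ := by rw [norm_mul]; simp
    _ ≤ C * ‖b‖ := mul_le_mul_of_nonneg_right (hCf x) (norm_nonneg _)
  have hre : ∫ x, (f x * (starRingEnd ℂ) b).re ∂ν = ‖b‖^2 := by
    have h1 : ∫ x, (f x * (starRingEnd ℂ) b).re ∂ν
        = (∫ x, f x * (starRingEnd ℂ) b ∂ν).re := by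
      have := (Complex.reCLM.integral_comp_comm (hif.mul_const ((starRingEnd ℂ) b)))
      simpa using this
    rw [h1, integral_mul_const, hb, Complex.mul_conj]
    simp [Complex.sq_norm]
  have hpt : (fun x => ‖f x - b‖^2)
      = fun x => (‖f x‖^2 - 2 * ((f x * (starRingEnd ℂ) b).re)) + ‖b‖^2 := by
    funext x
    exact normsq_sub_expand _ _
  have hsub : Integrable (fun x => ‖f x‖^2 - 2 * ((f x * (starRingEnd ℂ) b).re)) ν := by
    exact hA.sub (hcross.const_mul 2)
  rw [hpt, integral_add hsub (integrable_const _),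
    integral_sub hA (hcross.const_mul 2), integral_const_mul, hre, integral_const]
  simp only [measure_univ, probReal_univ, ENNReal.toReal_one, smul_eq_mul, one_mul]
  ring

end Aux

lemma main_aux {G : Type*} [Group G] [MeasurableSpace G] [MeasurableMul₂ G]
    (μ : Measure G) [IsProbabilityMeasure μ]
    (h : G → ℂ) (hmeas : Measurable h) (C : ℝ) (hC : ∀ x, ‖h x‖ ≤ C)
    (hharm : ∀ g, h g = ∫ γ, h (g * γ) ∂μ) (g : G) :
    ∃ B : Set G, MeasurableSet B ∧
      {z : G | z ∈ Subgroup.center G ∧ h (z * g) ≠ h g} ⊆ B ∧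
      ∀ n : ℕ, mconvPow μ n B = 0 := by
  classical
  have hdbd : ∀ u v : G, ‖h u - h v‖ ≤ 2 * C := by
    intro u v
    calc ‖h u - h v‖ ≤ ‖h u‖ + ‖h v‖ := norm_sub_le _ _
    _ ≤ C + C := add_le_add (hC _) (hC _)
    _ = 2 * C := by ring
  have hdbdsq : ∀ u v : G, ‖(‖h u - h v‖^2)‖ ≤ (2*C)^2 := by
    intro u v
    rw [Real.norm_eq_abs, abs_of_nonneg (sq_nonneg _)]
    exact pow_le_pow_left₀ (norm_nonneg _) (hdbd u v) 2
  have hsqbd : ∀ u : G, ‖(‖h u‖^2)‖ ≤ C^2 := by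
    intro u
    rw [Real.norm_eq_abs, abs_of_nonneg (sq_nonneg _)]
    exact pow_le_pow_left₀ (norm_nonneg _) (hC u) 2
  -- the functions
  set f : G → ℝ := fun z => ‖h (z * g) - h g‖^2 with hf_def
  have hfmeas : Measurable f :=
    (((hmeas.comp (measurable_mul_const g)).sub measurable_const).norm).pow_const 2
  have hfnonneg : ∀ z, 0 ≤ f z := fun z => sq_nonneg _
  set Q : ℕ → G → ℝ :=
    fun m z => ∫ w, ‖h (g * w * z) - h (g * w)‖^2 ∂(mconvPow μ m) with hQ_def
  have hqmeas : Measurable fun p : G × G => ‖h (g * p.2 * p.1) - h (g * p.2)‖^2 :=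
    (((hmeas.comp ((measurable_snd.const_mul g).mul measurable_fst)).sub
      (hmeas.comp (measurable_snd.const_mul g))).norm).pow_const 2
  have hQsm : ∀ m, StronglyMeasurable (Q m) := fun m =>
    hqmeas.stronglyMeasurable.integral_prod_right'
  have hQbd : ∀ m z, ‖Q m z‖ ≤ (2*C)^2 := fun m z =>
    norm_int_le (mconvPow μ m) fun w => hdbdsq _ _
  have hQnonneg : ∀ m z, 0 ≤ Q m z := fun m z => integral_nonneg fun w => sq_nonneg _
  -- φ
  set φ : ℕ → ℝ := fun m => ∫ w, ‖h (g * w)‖^2 ∂(mconvPow μ m) with hφ_def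
  have hφsm : StronglyMeasurable fun u : G => ‖h (g * u)‖^2 :=
    (((hmeas.comp (measurable_const_mul g)).norm).pow_const 2).stronglyMeasurable
  have hφmono : Monotone φ := by
    refine monotone_nat_of_le_succ fun m => ?_
    have heq : φ (m+1) = ∫ w, ∫ γ, ‖h (g * (w * γ))‖^2 ∂μ ∂(mconvPow μ m) := by
      show ∫ u, ‖h (g * u)‖^2 ∂(mconv (mconvPow μ m) μ) = _
      exact integral_mconv _ _ hφsm fun x => hsqbd _
    rw [heq]
    have hGsm : StronglyMeasurable fun w : G => ∫ γ, ‖h (g * (w * γ))‖^2 ∂μ := by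
      have : StronglyMeasurable fun p : G × G => ‖h (g * (p.1 * p.2))‖^2 :=
        ((((hmeas.comp ((measurable_fst.mul measurable_snd).const_mul g))).norm).pow_const
          2).stronglyMeasurable
      exact this.integral_prod_right'
    refine integral_mono (ibd hφsm.aestronglyMeasurable fun u => hsqbd _)
      (ibd hGsm.aestronglyMeasurable (C := C^2) fun w => norm_int_le μ fun γ => hsqbd _) ?_
    intro w
    have h1 : h (g * w) = ∫ γ, h ((g * w) * γ) ∂μ := hharm (g * w)
    have haesm : AEStronglyMeasurable (fun γ => h ((g * w) * γ)) μ :=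
      (hmeas.comp (measurable_const_mul (g * w))).aestronglyMeasurable
    have h2 : ‖h (g * w)‖^2 ≤ ∫ γ, ‖h ((g * w) * γ)‖^2 ∂μ := by
      rw [h1]
      exact norm_integral_sq_le μ haesm (C := C) (fun γ => hC _)
    simpa [mul_assoc] using h2
  have hφbd : ∀ m, φ m ≤ C^2 := fun m =>
    le_trans (le_abs_self _) (by
      rw [← Real.norm_eq_abs]
      exact norm_int_le (mconvPow μ m) fun w => hsqbd _)
  have hφtend : Tendsto φ atTop (𝓝 (⨆ m, φ m)) :=
    tendsto_atTop_ciSup hφmono ⟨C^2, by rintro x ⟨m, rfl⟩; exact hφbd m⟩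
  have hdiff : ∀ n : ℕ, Tendsto (fun m => φ (m + n) - φ m) atTop (𝓝 0) := by
    intro n
    have h1 : Tendsto (fun m => φ (m + n)) atTop (𝓝 (⨆ m, φ m)) :=
      hφtend.comp (tendsto_add_atTop_nat n)
    simpa using h1.sub hφtend
  -- the key identity
  have int_Q : ∀ n m : ℕ, ∫ z, Q m z ∂(mconvPow μ n) = φ (m + n) - φ m := by
    intro n m
    have hswap : ∫ z, Q m z ∂(mconvPow μ n)
        = ∫ w, ∫ z, ‖h (g * w * z) - h (g * w)‖^2 ∂(mconvPow μ n) ∂(mconvPow μ m) := by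
      exact integral_integral_swap (ibd hqmeas.stronglyMeasurable.aestronglyMeasurable
        fun p => hdbdsq _ _)
    have hpt : ∀ w : G, ∫ z, ‖h (g * w * z) - h (g * w)‖^2 ∂(mconvPow μ n)
        = (∫ z, ‖h (g * w * z)‖^2 ∂(mconvPow μ n)) - ‖h (g * w)‖^2 := by
      intro w
      have haesm : AEStronglyMeasurable (fun z => h (g * w * z)) (mconvPow μ n) :=
        (hmeas.comp (measurable_const_mul (g * w))).aestronglyMeasurable
      exact integral_normsq_sub (mconvPow μ n) haesm (C := C)
        (fun z => hC _) (h (g * w)) (harm_pow μ hmeas hC hharm n (g * w)).symm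
    have hIsm : StronglyMeasurable fun w : G => ∫ z, ‖h (g * w * z)‖^2 ∂(mconvPow μ n) := by
      have : StronglyMeasurable fun p : G × G => ‖h (g * p.1 * p.2)‖^2 :=
        (((hmeas.comp ((measurable_fst.const_mul g).mul measurable_snd)).norm).pow_const
          2).stronglyMeasurable
      exact this.integral_prod_right'
    have hIint : Integrable (fun w : G => ∫ z, ‖h (g * w * z)‖^2 ∂(mconvPow μ n))
        (mconvPow μ m) :=
      ibd hIsm.aestronglyMeasurable (C := C^2) fun w => norm_int_le _ fun z => hsqbd _
    have hmain : ∫ w, ∫ z, ‖h (g * w * z)‖^2 ∂(mconvPow μ n) ∂(mconvPow μ m) = φ (m + n) := by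
      have h2 := integral_mconvPow_add μ m n (fun u => ‖h (g * u)‖^2) hφsm (C^2)
        (fun u => hsqbd _)
      simp only [← mul_assoc] at h2
      exact h2.symm
    calc ∫ z, Q m z ∂(mconvPow μ n)
        = ∫ w, ∫ z, ‖h (g * w * z) - h (g * w)‖^2 ∂(mconvPow μ n) ∂(mconvPow μ m) := hswap
    _ = ∫ w, ((∫ z, ‖h (g * w * z)‖^2 ∂(mconvPow μ n)) - ‖h (g * w)‖^2) ∂(mconvPow μ m) :=
        integral_congr_ae (Eventually.of_forall fun w => hpt w)
    _ = (∫ w, ∫ z, ‖h (g * w * z)‖^2 ∂(mconvPow μ n) ∂(mconvPow μ m))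
          - ∫ w, ‖h (g * w)‖^2 ∂(mconvPow μ m) :=
        integral_sub hIint (ibd hφsm.aestronglyMeasurable fun u => hsqbd _)
    _ = φ (m + n) - φ m := by rw [hmain]
  -- the bad set
  refine ⟨{z | 0 < f z} ∩ ⋂ m, {z | f z ≤ Q m z}, ?_, ?_, ?_⟩
  · exact (measurableSet_lt measurable_const hfmeas).inter
      (MeasurableSet.iInter fun m => measurableSet_le hfmeas (hQsm m).measurable)
  · rintro z ⟨hzc, hzne⟩
    have hcomm : ∀ a : G, a * z = z * a := Subgroup.mem_center_iff.mp hzc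
    have hzg : ∀ w : G, z * g * w = g * w * z := by
      intro w
      rw [mul_assoc]
      exact (hcomm (g * w)).symm
    refine ⟨pow_pos (norm_pos_iff.mpr (sub_ne_zero_of_ne hzne)) 2, ?_⟩
    refine Set.mem_iInter.mpr fun m => ?_
    have ha1 : Integrable (fun w => h (z * g * w)) (mconvPow μ m) :=
      ibd ((hmeas.comp (measurable_const_mul (z*g))).aestronglyMeasurable) (fun w => hC _)
    have ha2 : Integrable (fun w => h (g * w)) (mconvPow μ m) :=
      ibd ((hmeas.comp (measurable_const_mul g)).aestronglyMeasurable) (fun w => hC _)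
    have hsub : h (z * g) - h g = ∫ w, (h (z * g * w) - h (g * w)) ∂(mconvPow μ m) := by
      rw [integral_sub ha1 ha2]
      rw [← harm_pow μ hmeas hC hharm m (z * g), ← harm_pow μ hmeas hC hharm m g]
    show f z ≤ Q m z
    calc f z = ‖∫ w, (h (z * g * w) - h (g * w)) ∂(mconvPow μ m)‖^2 := by
          rw [hf_def]; simp only []; rw [hsub]
    _ ≤ ∫ w, ‖h (z * g * w) - h (g * w)‖^2 ∂(mconvPow μ m) := by
        have haesm : AEStronglyMeasurable (fun w => h (z * g * w) - h (g * w))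
            (mconvPow μ m) := (((hmeas.comp (measurable_const_mul (z*g))).sub
          (hmeas.comp (measurable_const_mul g))).aestronglyMeasurable)
        exact norm_integral_sq_le _ haesm (C := 2*C) (fun w => hdbd _ _)
    _ = Q m z := integral_congr_ae (Eventually.of_forall fun w => by simp only [hzg])
  · intro n
    set B := {z | 0 < f z} ∩ ⋂ m, {z | f z ≤ Q m z} with hB_def
    have hBmeas : MeasurableSet B := (measurableSet_lt measurable_const hfmeas).inter
      (MeasurableSet.iInter fun m => measurableSet_le hfmeas (hQsm m).measurable)
    have hfint : Integrable f (mconvPow μ n) :=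
      ibd hfmeas.aestronglyMeasurable fun z => hdbdsq _ _
    have hQint : ∀ m, Integrable (Q m) (mconvPow μ n) := fun m =>
      ibd (hQsm m).aestronglyMeasurable fun z => hQbd m z
    have hkey : ∀ m, ∫ z in B, f z ∂(mconvPow μ n) ≤ φ (m + n) - φ m := by
      intro m
      calc ∫ z in B, f z ∂(mconvPow μ n) ≤ ∫ z in B, Q m z ∂(mconvPow μ n) :=
            setIntegral_mono_on hfint.integrableOn (hQint m).integrableOn hBmeas
              (fun z hz => Set.mem_iInter.mp hz.2 m)
      _ ≤ ∫ z, Q m z ∂(mconvPow μ n) :=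
            setIntegral_le_integral (hQint m) (Eventually.of_forall fun z => hQnonneg m z)
      _ = φ (m + n) - φ m := int_Q n m
    have hle0 : ∫ z in B, f z ∂(mconvPow μ n) ≤ 0 := ge_of_tendsto' (hdiff n) hkey
    have hzero : ∫ z in B, f z ∂(mconvPow μ n) = 0 :=
      le_antisymm hle0 (setIntegral_nonneg hBmeas fun z _ => hfnonneg z)
    have hnotpos : ¬ 0 < mconvPow μ n (Function.support f ∩ B) := by
      rw [← setIntegral_pos_iff_support_of_nonneg_ae
        (Eventually.of_forall fun z => hfnonneg z) hfint.integrableOn]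
      simp [hzero]
    have hsupp0 : mconvPow μ n (Function.support f ∩ B) = 0 := by
      by_contra hne
      exact hnotpos (lt_of_le_of_ne zero_le (Ne.symm hne))
    have hBsub : B ⊆ Function.support f ∩ B := fun z hz =>
      ⟨ne_of_gt hz.1, hz⟩
    exact le_antisymm (le_trans (measure_mono hBsub) (le_of_eq hsupp0)) zero_le

/-- a bounded harmonic function is `μ̃`-a.e. invariant under central elements. -/
theorem stmt9 {G : Type*} [Group G] [TopologicalSpace G] [IsTopologicalGroup G]
    [MeasurableSpace G] [BorelSpace G] [MeasurableMul₂ G]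
    (μ : Measure G) [IsProbabilityMeasure μ]
    (h : G → ℂ) (hmeas : Measurable h) (hbdd : ∃ C, ∀ g, ‖h g‖ ≤ C)
    (hharm : ∀ g, h g = ∫ γ, h (g * γ) ∂μ) :
    ∀ g : G, tildeMeasure μ {z : G | z ∈ Subgroup.center G ∧ h (z * g) ≠ h g} = 0 := by
  intro g
  obtain ⟨C, hC⟩ := hbdd
  obtain ⟨B, hBmeas, hSB, hB0⟩ := main_aux μ h hmeas C hC hharm g
  refine measure_mono_null hSB ?_
  rw [tildeMeasure, Measure.sum_apply _ hBmeas]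
  simp [Measure.smul_apply, hB0]
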